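/- (Oddtown theorem.) Let A₁, …, A_m be subsets of an n-element set such that each Aᵢ has odd cardinality and for all i ≠ j the cardinality of Aᵢ ∩ Aⱼ is even. Then m ≤ n. -/
import Mathlib


/-- Oddtown theorem: if `A₁, …, A_m` are subsets of an `n`-element set, each of odd
cardinality, with all pairwise intersections of even cardinality, then `m ≤ n`. -/
theorem oddtown (n m : ℕ) (A : Fin m → Finset (Fin n))
    (hodd : ∀ i, Odd (A i).card)
    (heven : ∀ i j : Fin m, i ≠ j → Even ((A i ∩ A j).card)) :
    m ≤ n := by
  classical
  set v : Fin m → (Fin n → ZMod 2) := fun i x => if x ∈ A i then 1 else 0 with hv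
  have hdot : ∀ i j, ∑ x, v i x * v j x = ((A i ∩ A j).card : ZMod 2) := by
    intro i j
    have : ∀ x : Fin n, v i x * v j x = if x ∈ A i ∩ A j then (1 : ZMod 2) else 0 := by
      intro x
      simp only [hv, Finset.mem_inter]
      by_cases h1 : x ∈ A i <;> by_cases h2 : x ∈ A j <;> simp [h1, h2]
    rw [Finset.sum_congr rfl (fun x _ => this x), Finset.sum_ite_mem,
      Finset.univ_inter, Finset.sum_const, nsmul_eq_mul, mul_one]
  have hdiag : ∀ i, ∑ x, v i x * v i x = 1 := by
    intro i
    rw [hdot i i, Finset.inter_self]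
    obtain ⟨k, hk⟩ := hodd i
    rw [hk]; push_cast
    rw [show (2:ZMod 2) = 0 from rfl]; ring
  have hoff : ∀ i j, i ≠ j → ∑ x, v i x * v j x = 0 := by
    intro i j hij
    rw [hdot i j]
    obtain ⟨k, hk⟩ := heven i j hij
    rw [hk]; push_cast
    rw [← two_mul, show (2:ZMod 2) = 0 from rfl]; ring
  have hli : LinearIndependent (ZMod 2) v := by
    rw [Fintype.linearIndependent_iff]
    intro g hg j
    have h0 : ∑ x, (∑ i, g i • v i) x * v j x = 0 := by
      rw [hg]; simp
    have h1 : ∑ x, (∑ i, g i • v i) x * v j x = ∑ i, g i * ∑ x, v i x * v j x := by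
      simp only [Finset.sum_apply, Pi.smul_apply, smul_eq_mul, Finset.sum_mul, Finset.mul_sum]
      rw [Finset.sum_comm]
      congr 1; ext x; congr 1; ext i; ring
    rw [h1] at h0
    have h2 : ∑ i, g i * ∑ x, v i x * v j x = g j := by
      rw [Finset.sum_eq_single j]
      · rw [hdiag j, mul_one]
      · intro i _ hij; rw [hoff i j hij, mul_zero]
      · intro h; exact absurd (Finset.mem_univ j) h
    rw [h2] at h0; exact h0
  have := hli.fintype_card_le_finrank
  simpa using this
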